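/- Let F be a finite family of finite sets admitting a join tree T. Then any ordering of F obtained by a preorder traversal of T (visiting each node before its subtrees, starting from any chosen root) is a running intersection ordering of F. -/

import Mathlib

/-- `S` is a running intersection ordering: for every index `a ≥ 1` there is an earlier
index `b` such that `S a ∩ (⋃_{c < a} S c) ⊆ S b`. -/
def IsRIO {α : Type*} [DecidableEq α] {n : ℕ} (S : Fin n → Finset α) : Prop :=
  ∀ a : Fin n, 0 < (a : ℕ) → ∃ b : Fin n, (b : ℕ) < (a : ℕ) ∧
    S a ∩ (Finset.univ.filter (fun c : Fin n => (c : ℕ) < (a : ℕ))).biUnion S ⊆ S b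

/-- `T` is a join tree for the family `F`. -/
def IsJoinTree {α : Type*} [DecidableEq α] (F : Finset (Finset α))
    (T : SimpleGraph {X // X ∈ F}) : Prop :=
  T.IsTree ∧ ∀ (X₁ X₂ : {X // X ∈ F}) (p : T.Walk X₁ X₂), p.IsPath →
    ∀ Z ∈ p.support, (X₁ : Finset α) ∩ (X₂ : Finset α) ⊆ (Z : Finset α)

/-- Any ordering of `F` obtained by a traversal of a join tree `T` that visits each
node before its subtrees (each node after the first is adjacent in `T` to an earlier
node, as holds for any preorder traversal from any root) is a running intersection
ordering of `F`. -/
theorem stmt1 {α : Type*} [DecidableEq α] (F : Finset (Finset α))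
    (T : SimpleGraph {X // X ∈ F}) (hT : IsJoinTree F T) {n : ℕ}
    (S : Fin n → {X // X ∈ F}) (hbij : Function.Bijective S)
    (htrav : ∀ a : Fin n, 0 < (a : ℕ) → ∃ b : Fin n, (b : ℕ) < (a : ℕ) ∧ T.Adj (S b) (S a)) :
    IsRIO (fun a => (S a : Finset α)) := by
  classical
  set e := Equiv.ofBijective S hbij with he
  have heS : ∀ a : Fin n, e.symm (S a) = a := by
    intro a; exact e.symm_apply_apply a
  -- key lemma: on any path from S c to S a with c < a, all vertices have index ≤ a
  have key : ∀ N : ℕ, ∀ a c : Fin n, (a : ℕ) ≤ N → (c : ℕ) < (a : ℕ) →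
      ∀ p : T.Walk (S c) (S a), p.IsPath → ∀ v ∈ p.support, ((e.symm v : Fin n) : ℕ) ≤ (a : ℕ) := by
    intro N
    induction N with
    | zero => intro a c ha hc; omega
    | succ N ih =>
      intro a c ha hc p hp v hv
      obtain ⟨b, hb, hadj⟩ := htrav a (by omega)
      -- obtain a path from S c to S b all of whose vertices have index < a
      have hsmall : ∃ p' : T.Walk (S c) (S b), p'.IsPath ∧
          ∀ w ∈ p'.support, ((e.symm w : Fin n) : ℕ) < (a : ℕ) := by
        rcases eq_or_ne c b with rfl | hcb
        · exact ⟨SimpleGraph.Walk.nil, SimpleGraph.Walk.IsPath.nil, by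
            intro w hw
            simp only [SimpleGraph.Walk.support_nil, List.mem_singleton] at hw
            subst hw; rw [heS]; omega⟩
        · obtain ⟨w0⟩ := (hT.1.isConnected (S c) (S b))
          set p' := w0.toPath
          rcases lt_trichotomy (c : ℕ) (b : ℕ) with hlt | heq | hgt
          · refine ⟨p'.1, p'.2, ?_⟩
            intro w hw
            have := ih b c (by omega) hlt p'.1 p'.2 w hw
            omega
          · exact absurd (Fin.ext heq) hcb
          · refine ⟨p'.1, p'.2, ?_⟩
            intro w hw
            have hw' : w ∈ (p'.1.reverse).support := by
              rw [SimpleGraph.Walk.support_reverse]; simpa using hw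
            have := ih c b (by omega) hgt p'.1.reverse p'.2.reverse w hw'
            omega
      obtain ⟨p', hp', hps⟩ := hsmall
      -- S a is not on p'
      have hna : S a ∉ p'.support := by
        intro hcon
        have := hps (S a) hcon
        rw [heS] at this; omega
      -- build the path q from S c to S a
      have hq : (SimpleGraph.Walk.cons hadj.symm p'.reverse).reverse.IsPath := by
        apply SimpleGraph.Walk.IsPath.reverse
        apply SimpleGraph.Walk.IsPath.cons hp'.reverse
        rw [SimpleGraph.Walk.support_reverse]
        simpa using hna
      -- by uniqueness, p = q
      have hpq : p = (SimpleGraph.Walk.cons hadj.symm p'.reverse).reverse := by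
        have := hT.1.IsAcyclic.path_unique ⟨p, hp⟩
          ⟨(SimpleGraph.Walk.cons hadj.symm p'.reverse).reverse, hq⟩
        exact congrArg Subtype.val this
      rw [hpq] at hv
      rw [SimpleGraph.Walk.support_reverse, List.mem_reverse,
        SimpleGraph.Walk.support_cons, List.mem_cons] at hv
      rcases hv with hv | hv
      · subst hv; rw [heS]
      · rw [SimpleGraph.Walk.support_reverse, List.mem_reverse] at hv
        exact le_of_lt (hps v hv)
  -- uniqueness of the earlier neighbor
  have huniq : ∀ a b d : Fin n, (b : ℕ) < a → (d : ℕ) < a → T.Adj (S b) (S a) →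
      T.Adj (S d) (S a) → b = d := by
    intro a b d hb hd hadjb hadjd
    by_contra hne
    have hSne : S b ≠ S d := fun h => hne (hbij.1 h)
    -- walk b - a - d
    have hw : (SimpleGraph.Walk.cons hadjb (hadjd.symm.toWalk)).IsPath := by
      apply SimpleGraph.Walk.IsPath.cons
      · exact SimpleGraph.Walk.IsPath.cons SimpleGraph.Walk.IsPath.nil (by
          simp only [SimpleGraph.Walk.support_nil, List.mem_singleton]
          exact fun h => hadjd.ne h.symm)
      · simp only [SimpleGraph.Adj.toWalk, SimpleGraph.Walk.support_cons,
          SimpleGraph.Walk.support_nil, List.mem_cons, List.mem_singleton]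
        push_neg
        exact ⟨fun h => hadjb.ne h, hSne, List.not_mem_nil⟩
    rcases lt_trichotomy (b : ℕ) (d : ℕ) with hlt | heq | hgt
    · have := key n d b d.isLt.le hlt _ hw (S a)
        (by simp [SimpleGraph.Walk.support_cons])
      rw [heS] at this; omega
    · exact hne (Fin.ext heq)
    · have := key n b d b.isLt.le hgt _ hw.reverse (S a)
        (by simp [SimpleGraph.Walk.support_reverse])
      rw [heS] at this; omega
  -- main proof
  intro a ha
  obtain ⟨b, hb, hadj⟩ := htrav a ha
  refine ⟨b, hb, ?_⟩
  intro x hx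
  simp only [Finset.mem_inter, Finset.mem_biUnion, Finset.mem_filter, Finset.mem_univ,
    true_and] at hx
  obtain ⟨hxa, c, hc, hxc⟩ := hx
  -- take the path from S c to S a
  have hSne : S c ≠ S a := fun h => by have := hbij.1 h; omega
  obtain ⟨w0⟩ := hT.1.isConnected (S c) (S a)
  set p := w0.toPath with hp
  -- the neighbor of S a on p is S b
  obtain ⟨v, hadjv, q, hq⟩ :=
    SimpleGraph.Walk.exists_eq_cons_of_ne (hSne.symm) p.1.reverse
  have hvq : v ∈ q.support := q.start_mem_support
  have hvp : v ∈ p.1.support := by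
    rw [← List.mem_reverse, ← SimpleGraph.Walk.support_reverse, hq,
      SimpleGraph.Walk.support_cons]
    exact List.mem_cons_of_mem _ hvq
  -- index of v is < a
  have hprev : p.1.reverse.IsPath := p.2.reverse
  have hvle : ((e.symm v : Fin n) : ℕ) ≤ (a : ℕ) :=
    key n a c a.isLt.le hc p.1 p.2 v hvp
  have hvne : v ≠ S a := by
    rw [hq] at hprev
    have := hprev.2
    simp only [SimpleGraph.Walk.support_cons, List.nodup_cons] at this
    exact fun hcon => this.1 (hcon ▸ hvq)
  have hvlt : ((e.symm v : Fin n) : ℕ) < (a : ℕ) := by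
    rcases lt_or_eq_of_le hvle with h | h
    · exact h
    · exfalso; apply hvne
      have : e.symm v = a := Fin.ext h
      have := congrArg e this
      rwa [Equiv.apply_symm_apply] at this
  -- v = S b by uniqueness
  have hvb : e.symm v = b := by
    refine (huniq a b (e.symm v) hb hvlt hadj ?_).symm
    have : S (e.symm v) = v := e.apply_symm_apply v
    rw [this]; exact hadjv.symm
  have hvSb : v = S b := by rw [← hvb]; exact (e.apply_symm_apply v).symm
  -- join tree property
  have := hT.2 (S c) (S a) p.1 p.2 v hvp (Finset.mem_inter.mpr ⟨hxc, hxa⟩)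
  rwa [hvSb] at this
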